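/- (Theorem 1, null space learning guarantee) Let A = B + S ∈ ℝ^{N₁×n} with rows a_i, b_i, s_i, let z* be the minimizer of ‖Sz‖₁ over {z : Bz = 0, vᵀz = 1}, let L_S = {i : s_i = 0}, L_{z*} = {i : s_iᵀz* = 0}, α = ∑_i sgn(s_iᵀz*)·a_i, and let R_b, P_b be orthonormal bases of the row space and null space of B. If (1/2)·inf_{δ∈R_b, ‖δ‖=1} ( ∑_{i∈L_S} |b_iᵀδ| − 2∑_{i∈L_S^c ∩ L_{z*}} |b_iᵀδ| ) > ∑_{i∈L_{z*}} ‖s_i‖ + ‖α‖, and (‖vᵀP_b‖/(2‖vᵀR_b‖))·inf_{δ∈R_b, ‖δ‖=1} ∑_{i∈L_S} |b_iᵀδ| > ∑_{i∈L_{z*}} ‖s_i‖ + ‖α‖, then z* is a global minimizer of ‖Az‖₁ over {z : vᵀz = 1}. -/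

import Mathlib

open scoped Classical

private lemma sign_mul_le_abs (p x : ℝ) : Real.sign p * x ≤ |x| := by
  rcases lt_trichotomy p 0 with h|h|h
  · rw [Real.sign_of_neg h]; simpa using neg_le_abs x
  · simp [h, abs_nonneg]
  · rw [Real.sign_of_pos h]; simpa using le_abs_self x

private lemma sign_mul_self_eq_abs (p : ℝ) : Real.sign p * p = |p| := by
  rcases lt_trichotomy p 0 with h|h|h
  · rw [Real.sign_of_neg h, abs_of_neg h]; ring
  · simp [h]
  · rw [Real.sign_of_pos h, abs_of_pos h]; ring

private lemma abs_add_mul_sign (p q t : ℝ) (ht : 0 ≤ t) (h : t * |q| ≤ |p|) :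
    |p + t * q| = |p| + t * (Real.sign p * q) := by
  have habs : |t * q| ≤ |p| := by rwa [abs_mul, abs_of_nonneg ht]
  rcases lt_trichotomy p 0 with hp|hp|hp
  · rw [Real.sign_of_neg hp]
    have h1 : p + t * q ≤ 0 := by
      have := neg_abs_le (t * q); have := le_abs_self (t*q)
      rw [abs_of_neg hp] at habs; linarith
    rw [abs_of_nonpos h1, abs_of_neg hp]; ring
  · have h0 : |t * q| = 0 := le_antisymm (by simpa [hp] using habs) (abs_nonneg _)
    have : t * q = 0 := abs_eq_zero.mp h0
    simp [hp, this]
  · rw [Real.sign_of_pos hp]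
    have h1 : 0 ≤ p + t * q := by
      have := neg_abs_le (t * q)
      rw [abs_of_pos hp] at habs; linarith
    rw [abs_of_nonneg h1, abs_of_pos hp]; ring

set_option maxHeartbeats 2000000 in
/-- Theorem 1 (null space learning guarantee). `A = B + S` with rows `aᵢ = bᵢ + sᵢ`,
`z*` minimizes `‖Sz‖₁` over `{z : Bz = 0, vᵀz = 1}`, `L_S = {i : sᵢ = 0}`,
`L_{z*} = {i : sᵢᵀz* = 0}`, `α = ∑ᵢ sgn(sᵢᵀz*) aᵢ`, `R` the row space of `B`.
Under the two stated inequalities, `z*` is a global minimizer of `‖Az‖₁`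
over `{z : vᵀz = 1}`. -/
theorem stmt_12 {N₁ n : ℕ}
    (a b s : Fin N₁ → EuclideanSpace ℝ (Fin n))
    (hA : ∀ i, a i = b i + s i)
    (v : EuclideanSpace ℝ (Fin n))
    (R : Submodule ℝ (EuclideanSpace ℝ (Fin n)))
    (hR : R = Submodule.span ℝ (Set.range b))
    (zs : EuclideanSpace ℝ (Fin n))
    (hfeas : (∀ i, (inner ℝ (b i) zs : ℝ) = 0) ∧ (inner ℝ v zs : ℝ) = 1)
    (hopt : ∀ z, (∀ i, (inner ℝ (b i) z : ℝ) = 0) → (inner ℝ v z : ℝ) = 1 →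
      ∑ i, |(inner ℝ (s i) zs : ℝ)| ≤ ∑ i, |(inner ℝ (s i) z : ℝ)|)
    (α : EuclideanSpace ℝ (Fin n))
    (hα : α = ∑ i, Real.sign (inner ℝ (s i) zs : ℝ) • a i)
    (LS : Finset (Fin N₁)) (hLS : LS = Finset.univ.filter fun i => s i = 0)
    (Lz : Finset (Fin N₁)) (hLz : Lz = Finset.univ.filter fun i => (inner ℝ (s i) zs : ℝ) = 0)
    (h1 : ∑ i ∈ Lz, ‖s i‖ + ‖α‖ <
      (1 / 2) * sInf {x : ℝ | ∃ δ, δ ∈ R ∧ ‖δ‖ = 1 ∧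
        x = ∑ i ∈ LS, |(inner ℝ (b i) δ : ℝ)|
          - 2 * ∑ i ∈ LSᶜ ∩ Lz, |(inner ℝ (b i) δ : ℝ)|})
    (h2 : ∑ i ∈ Lz, ‖s i‖ + ‖α‖ <
      (‖(Submodule.orthogonalProjection Rᗮ v : EuclideanSpace ℝ (Fin n))‖ /
        (2 * ‖(Submodule.orthogonalProjection R v : EuclideanSpace ℝ (Fin n))‖)) *
      sInf {x : ℝ | ∃ δ, δ ∈ R ∧ ‖δ‖ = 1 ∧ x = ∑ i ∈ LS, |(inner ℝ (b i) δ : ℝ)|}) :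
    ∀ z : EuclideanSpace ℝ (Fin n), (inner ℝ v z : ℝ) = 1 →
      ∑ i, |(inner ℝ (a i) zs : ℝ)| ≤ ∑ i, |(inner ℝ (a i) z : ℝ)| := by
  intro z hz
  set p : Fin N₁ → ℝ := fun i => (inner ℝ (s i) zs : ℝ) with hp
  set σ : Fin N₁ → ℝ := fun i => Real.sign (p i) with hσdef
  -- basic membership facts
  have hbR : ∀ i, b i ∈ R := fun i => hR ▸ Submodule.subset_span (Set.mem_range_self i)
  have horthob : ∀ w, w ∈ Rᗮ → ∀ i, (inner ℝ (b i) w : ℝ) = 0 :=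
    fun w hw i => (Submodule.mem_orthogonal R w).mp hw (b i) (hbR i)
  have hzsN : zs ∈ Rᗮ := by
    rw [hR]
    rw [Submodule.mem_orthogonal]
    intro u hu
    induction hu using Submodule.span_induction with
    | mem w hw => obtain ⟨i, rfl⟩ := hw; exact hfeas.1 i
    | zero => simp
    | add x y _ _ hx hy => rw [inner_add_left, hx, hy]; ring
    | smul c x _ hx => rw [real_inner_smul_left, hx]; ring
  have hLSmem : ∀ i, i ∈ LS ↔ s i = 0 := by intro i; simp [hLS]
  have hLzmem : ∀ i, i ∈ Lz ↔ p i = 0 := by intro i; simp [hLz, hp]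
  have hLSsub : LS ⊆ Lz := by
    intro i hi
    rw [hLzmem]
    rw [hLSmem] at hi
    simp [hp, hi, inner_zero_left]
  have hσLz : ∀ i ∈ Lz, σ i = 0 := by
    intro i hi; rw [hσdef]; simp [(hLzmem i).mp hi]
  have hcompl : LSᶜ ∩ Lz = Lz \ LS := by
    ext i; simp [Finset.mem_sdiff, Finset.mem_inter, Finset.mem_compl, and_comm]
  -- α inner ℝ products
  have hαinner : ∀ e : EuclideanSpace ℝ (Fin n),
      (inner ℝ α e : ℝ) = ∑ i, σ i * (inner ℝ (a i) e : ℝ) := by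
    intro e
    rw [hα, sum_inner]
    exact Finset.sum_congr rfl fun i _ => real_inner_smul_left _ _ _
  -- K2: directional optimality
  have K2 : ∀ u : EuclideanSpace ℝ (Fin n), u ∈ Rᗮ → (inner ℝ v u : ℝ) = 0 →
      0 ≤ (∑ i, σ i * (inner ℝ (s i) u : ℝ)) + ∑ i ∈ Lz, |(inner ℝ (s i) u : ℝ)| := by
    intro u huN hvu
    set q : Fin N₁ → ℝ := fun i => (inner ℝ (s i) u : ℝ) with hq
    by_cases hP : (Finset.univ.filter fun i => p i ≠ 0).Nonempty
    · set m := (Finset.univ.filter fun i => p i ≠ 0).inf' hP (fun i => |p i|) with hm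
      have hm0 : 0 < m := by
        rw [hm, Finset.lt_inf'_iff]
        intro i hi
        exact abs_pos.mpr (Finset.mem_filter.mp hi).2
      set c : ℝ := (∑ i, |q i|) + 1 with hc
      have hc0 : 0 < c := by
        rw [hc]
        have : (0:ℝ) ≤ ∑ i, |q i| := Finset.sum_nonneg fun i _ => abs_nonneg _
        linarith
      set t := m / c with htdef
      have ht0 : 0 < t := div_pos hm0 hc0
      have hfeas' : ∀ i, (inner ℝ (b i) (zs + t • u) : ℝ) = 0 := by
        intro i
        rw [inner_add_right, real_inner_smul_right, hfeas.1 i, horthob u huN i]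
        ring
      have hv' : (inner ℝ v (zs + t • u) : ℝ) = 1 := by
        rw [inner_add_right, real_inner_smul_right, hfeas.2, hvu]; ring
      have hopt' := hopt _ hfeas' hv'
      have hsu : ∀ i, (inner ℝ (s i) (zs + t • u) : ℝ) = p i + t * q i := by
        intro i
        rw [inner_add_right, real_inner_smul_right]
      have key : ∀ i, |p i + t * q i|
          = |p i| + t * (σ i * q i + if i ∈ Lz then |q i| else 0) := by
        intro i
        by_cases hi : i ∈ Lz
        · have hpi : p i = 0 := (hLzmem i).mp hi
          have hσi : σ i = 0 := hσLz i hi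
          rw [hpi, hσi, if_pos hi]
          simp [abs_mul, abs_of_pos ht0]
        · have hpi : p i ≠ 0 := fun h => hi ((hLzmem i).mpr h)
          have hle : t * |q i| ≤ |p i| := by
            have h1 : |q i| ≤ c := by
              rw [hc]
              have := Finset.single_le_sum (f := fun j => |q j|)
                (fun j _ => abs_nonneg _) (Finset.mem_univ i)
              linarith
            have h2 : m ≤ |p i| := Finset.inf'_le _ (Finset.mem_filter.mpr ⟨Finset.mem_univ i, hpi⟩)
            calc t * |q i| ≤ t * c := by
                  exact mul_le_mul_of_nonneg_left h1 ht0.le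
              _ = m := div_mul_cancel₀ _ hc0.ne'
              _ ≤ |p i| := h2
          rw [abs_add_mul_sign (p i) (q i) t ht0.le hle, if_neg hi, hσdef]
          ring_nf
      have hsum : ∑ i, |p i + t * q i|
          = (∑ i, |p i|) + t * ((∑ i, σ i * q i) + ∑ i ∈ Lz, |q i|) := by
        rw [Finset.sum_congr rfl fun i _ => key i, Finset.sum_add_distrib,
          ← Finset.mul_sum, Finset.sum_add_distrib, Finset.sum_ite_mem,
          Finset.univ_inter]
      have h0 : (∑ i, |p i|) ≤ ∑ i, |p i + t * q i| := by
        calc (∑ i, |p i|) ≤ ∑ i, |(inner ℝ (s i) (zs + t • u) : ℝ)| := hopt'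
          _ = ∑ i, |p i + t * q i| := Finset.sum_congr rfl fun i _ => by rw [hsu i]
      rw [hsum] at h0
      nlinarith
    · have hall : ∀ i, σ i = 0 := by
        intro i
        have : ¬ p i ≠ 0 := fun h => hP ⟨i, Finset.mem_filter.mpr ⟨Finset.mem_univ i, h⟩⟩
        rw [hσdef]; simp [not_not.mp this]
      have : (∑ i, σ i * (inner ℝ (s i) u : ℝ)) = 0 :=
        Finset.sum_eq_zero fun i _ => by rw [hall i]; ring
      rw [this, zero_add]
      exact Finset.sum_nonneg fun i _ => abs_nonneg _
  -- F facts
  set F : ℝ := ∑ i, |p i| with hFdef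
  have hF0 : 0 ≤ F := Finset.sum_nonneg fun i _ => abs_nonneg _
  have hai_zs : ∀ i, (inner ℝ (a i) zs : ℝ) = p i := by
    intro i
    rw [hA i, inner_add_left, hfeas.1 i, zero_add]
  have hFα : (inner ℝ α zs : ℝ) = F := by
    rw [hαinner zs, hFdef]
    exact Finset.sum_congr rfl fun i _ => by rw [hai_zs i, hσdef, sign_mul_self_eq_abs]
  -- projection facts
  set vN : EuclideanSpace ℝ (Fin n) := (Submodule.orthogonalProjection Rᗮ v : EuclideanSpace ℝ (Fin n)) with hvNdef
  set vR : EuclideanSpace ℝ (Fin n) := (Submodule.orthogonalProjection R v : EuclideanSpace ℝ (Fin n)) with hvRdef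
  have hvNmem : vN ∈ Rᗮ := SetLike.coe_mem _
  have hinner_vN : ∀ u, u ∈ Rᗮ → (inner ℝ v u : ℝ) = (inner ℝ vN u : ℝ) := by
    intro u hu
    have hsub : v - vN ∈ Rᗮᗮ := Submodule.sub_starProjection_mem_orthogonal (K := Rᗮ) v
    have := (Submodule.mem_orthogonal Rᗮ (v - vN)).mp hsub u hu
    rw [real_inner_comm] at this
    rw [inner_sub_left] at this
    linarith
  have hinner_vR : ∀ x, x ∈ R → (inner ℝ v x : ℝ) = (inner ℝ vR x : ℝ) := by
    intro x hx
    have hsub : v - vR ∈ Rᗮ := Submodule.sub_starProjection_mem_orthogonal (K := R) v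
    have := (Submodule.mem_orthogonal R (v - vR)).mp hsub x hx
    rw [real_inner_comm] at this
    rw [inner_sub_left] at this
    linarith
  have hvNzs : (inner ℝ vN zs : ℝ) = 1 := by rw [← hinner_vN zs hzsN]; exact hfeas.2
  have hnv : 0 < ‖vN‖ := by
    rcases eq_or_lt_of_le (norm_nonneg vN) with h|h
    · exfalso
      have : vN = 0 := by rwa [eq_comm, norm_eq_zero] at h
      rw [this] at hvNzs
      simp at hvNzs
    · exact h
  have hvvN : (inner ℝ v vN : ℝ) = ‖vN‖ ^ 2 := by
    rw [hinner_vN vN hvNmem]; exact real_inner_self_eq_norm_sq vN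
  set M0 : ℝ := ∑ i ∈ Lz, ‖s i‖ with hM0def
  have hM00 : 0 ≤ M0 := Finset.sum_nonneg fun i _ => norm_nonneg _
  -- F bound : F * ‖vN‖ ≤ M0 + ‖α‖
  have hFle : F * ‖vN‖ ≤ M0 + ‖α‖ := by
    set q0 : EuclideanSpace ℝ (Fin n) := zs - (‖vN‖ ^ 2)⁻¹ • vN with hq0def
    have hq0N : q0 ∈ Rᗮ := Submodule.sub_mem _ hzsN (Submodule.smul_mem _ _ hvNmem)
    have hnv2 : (‖vN‖ ^ 2) ≠ 0 := by positivity
    have hvq0 : (inner ℝ v q0 : ℝ) = 0 := by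
      rw [hq0def, inner_sub_right, real_inner_smul_right, hvvN, hfeas.2]
      field_simp
      ring
    have hK2q := K2 (-q0) (Submodule.neg_mem _ hq0N) (by rw [inner_neg_right, hvq0]; ring)
    have hK2q' : (∑ i, σ i * (inner ℝ (s i) q0 : ℝ)) ≤ ∑ i ∈ Lz, |(inner ℝ (s i) q0 : ℝ)| := by
      have e1 : (∑ i, σ i * (inner ℝ (s i) (-q0) : ℝ)) = -(∑ i, σ i * (inner ℝ (s i) q0 : ℝ)) := by
        rw [← Finset.sum_neg_distrib]
        exact Finset.sum_congr rfl fun i _ => by rw [inner_neg_right]; ring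
      have e2 : (∑ i ∈ Lz, |(inner ℝ (s i) (-q0) : ℝ)|) = ∑ i ∈ Lz, |(inner ℝ (s i) q0 : ℝ)| :=
        Finset.sum_congr rfl fun i _ => by rw [inner_neg_right, abs_neg]
      rw [e1, e2] at hK2q
      linarith
    have hsq0 : ∀ i, (inner ℝ (s i) q0 : ℝ) = p i - (‖vN‖ ^ 2)⁻¹ * (inner ℝ (s i) vN : ℝ) := by
      intro i
      rw [hq0def, inner_sub_right, real_inner_smul_right]
    have hFsplit : F = (∑ i, σ i * (inner ℝ (s i) q0 : ℝ))
        + (‖vN‖ ^ 2)⁻¹ * ∑ i, σ i * (inner ℝ (s i) vN : ℝ) := by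
      rw [hFdef, Finset.mul_sum, ← Finset.sum_add_distrib]
      refine Finset.sum_congr rfl fun i _ => ?_
      rw [hsq0 i, ← sign_mul_self_eq_abs (p i), hσdef]
      ring
    have hαvN : (∑ i, σ i * (inner ℝ (s i) vN : ℝ)) = (inner ℝ α vN : ℝ) := by
      rw [hαinner vN]
      refine Finset.sum_congr rfl fun i _ => ?_
      rw [hA i, inner_add_left, horthob vN hvNmem i, zero_add]
    have hαvN_le : (inner ℝ α vN : ℝ) ≤ ‖α‖ * ‖vN‖ := real_inner_le_norm _ _
    have hLzbound : (∑ i ∈ Lz, |(inner ℝ (s i) q0 : ℝ)|)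
        ≤ (‖vN‖ ^ 2)⁻¹ * (M0 * ‖vN‖) := by
      rw [hM0def, Finset.sum_mul, Finset.mul_sum]
      refine Finset.sum_le_sum fun i hi => ?_
      rw [hsq0 i, (hLzmem i).mp hi, zero_sub, abs_neg, abs_mul,
        abs_of_nonneg (inv_nonneg.mpr (sq_nonneg _))]
      have := abs_real_inner_le_norm (s i) vN
      have h0 : (0:ℝ) ≤ (‖vN‖ ^ 2)⁻¹ := inv_nonneg.mpr (sq_nonneg _)
      nlinarith
    have : F ≤ (‖vN‖ ^ 2)⁻¹ * (M0 * ‖vN‖) + (‖vN‖ ^ 2)⁻¹ * (‖α‖ * ‖vN‖) := by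
      rw [hFsplit]
      have h0 : (0:ℝ) ≤ (‖vN‖ ^ 2)⁻¹ := inv_nonneg.mpr (sq_nonneg _)
      have := mul_le_mul_of_nonneg_left (hαvN ▸ hαvN_le) h0
      linarith [hK2q'.trans hLzbound]
    have hcalc : (‖vN‖ ^ 2)⁻¹ * (M0 * ‖vN‖) + (‖vN‖ ^ 2)⁻¹ * (‖α‖ * ‖vN‖)
        = (M0 + ‖α‖) / ‖vN‖ := by
      field_simp
    rw [hcalc] at this
    rw [← le_div_iff₀ hnv]
    exact this
  -- sInf facts
  have hbdd2 : BddBelow {x : ℝ | ∃ δ, δ ∈ R ∧ ‖δ‖ = 1 ∧ x = ∑ i ∈ LS, |(inner ℝ (b i) δ : ℝ)|} := by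
    refine ⟨0, ?_⟩
    rintro x ⟨δ, hδ, hδ1, rfl⟩
    positivity
  have hc2le : ∀ δ, δ ∈ R → ‖δ‖ = 1 →
      sInf {x : ℝ | ∃ δ, δ ∈ R ∧ ‖δ‖ = 1 ∧ x = ∑ i ∈ LS, |(inner ℝ (b i) δ : ℝ)|}
        ≤ ∑ i ∈ LS, |(inner ℝ (b i) δ : ℝ)| :=
    fun δ hδ hδ1 => csInf_le hbdd2 ⟨δ, hδ, hδ1, rfl⟩
  have hbdd1 : BddBelow {x : ℝ | ∃ δ, δ ∈ R ∧ ‖δ‖ = 1 ∧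
      x = ∑ i ∈ LS, |(inner ℝ (b i) δ : ℝ)| - 2 * ∑ i ∈ LSᶜ ∩ Lz, |(inner ℝ (b i) δ : ℝ)|} := by
    refine ⟨-(2 * ∑ i ∈ LSᶜ ∩ Lz, ‖b i‖), ?_⟩
    rintro x ⟨δ, hδ, hδ1, rfl⟩
    have hB : ∑ i ∈ LSᶜ ∩ Lz, |(inner ℝ (b i) δ : ℝ)| ≤ ∑ i ∈ LSᶜ ∩ Lz, ‖b i‖ := by
      refine Finset.sum_le_sum fun i _ => ?_
      have := abs_real_inner_le_norm (b i) δ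
      rw [hδ1, mul_one] at this
      exact this
    have hApos : (0:ℝ) ≤ ∑ i ∈ LS, |(inner ℝ (b i) δ : ℝ)| :=
      Finset.sum_nonneg fun i _ => abs_nonneg _
    linarith
  have hc1le : ∀ δ, δ ∈ R → ‖δ‖ = 1 →
      sInf {x : ℝ | ∃ δ, δ ∈ R ∧ ‖δ‖ = 1 ∧
        x = ∑ i ∈ LS, |(inner ℝ (b i) δ : ℝ)| - 2 * ∑ i ∈ LSᶜ ∩ Lz, |(inner ℝ (b i) δ : ℝ)|}
        ≤ ∑ i ∈ LS, |(inner ℝ (b i) δ : ℝ)| - 2 * ∑ i ∈ LSᶜ ∩ Lz, |(inner ℝ (b i) δ : ℝ)| :=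
    fun δ hδ hδ1 => csInf_le hbdd1 ⟨δ, hδ, hδ1, rfl⟩
  -- decomposition of z
  set x : EuclideanSpace ℝ (Fin n) := (Submodule.orthogonalProjection R z : EuclideanSpace ℝ (Fin n)) with hxdef
  have hxR : x ∈ R := SetLike.coe_mem _
  set y : EuclideanSpace ℝ (Fin n) := z - x with hydef
  have hyN : y ∈ Rᗮ := Submodule.sub_starProjection_mem_orthogonal z
  set τ : ℝ := (inner ℝ v y : ℝ) with hτdef
  set u : EuclideanSpace ℝ (Fin n) := y - τ • zs with hudef
  have huN : u ∈ Rᗮ := Submodule.sub_mem _ hyN (Submodule.smul_mem _ _ hzsN)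
  have hvu : (inner ℝ v u : ℝ) = 0 := by
    rw [hudef, inner_sub_right, real_inner_smul_right, hfeas.2, ← hτdef]; ring
  have hvx : (inner ℝ v x : ℝ) = 1 - τ := by
    have : (inner ℝ v y : ℝ) = (inner ℝ v z : ℝ) - (inner ℝ v x : ℝ) := by
      rw [hydef, inner_sub_right]
    rw [hz] at this
    rw [← hτdef] at this
    linarith
  have hzdecomp : z = x + (u + τ • zs) := by
    rw [hudef, hydef]; abel
  have hai_z : ∀ i, (inner ℝ (a i) z : ℝ)
      = (inner ℝ (a i) x : ℝ) + ((inner ℝ (s i) u : ℝ) + τ * p i) := by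
    intro i
    have e1 : (inner ℝ (a i) u : ℝ) = (inner ℝ (s i) u : ℝ) := by
      rw [hA i, inner_add_left, horthob u huN i, zero_add]
    conv_lhs => rw [hzdecomp]
    rw [inner_add_right, inner_add_right, real_inner_smul_right, e1, hai_zs i]
  -- per-term lower bound and sum
  have hsum_le : ∑ i, (σ i * (inner ℝ (a i) z : ℝ)
        + ((if i ∈ LS then |(inner ℝ (b i) x : ℝ)| else 0)
        + (if i ∈ Lz \ LS then |(inner ℝ (s i) u : ℝ)| - |(inner ℝ (b i) x : ℝ)| - ‖s i‖ * ‖x‖ else 0)))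
      ≤ ∑ i, |(inner ℝ (a i) z : ℝ)| := by
    refine Finset.sum_le_sum fun i _ => ?_
    by_cases hiLS : i ∈ LS
    · have hsi : s i = 0 := (hLSmem i).mp hiLS
      have hσi : σ i = 0 := hσLz i (hLSsub hiLS)
      have hnotin : i ∉ Lz \ LS := fun h => (Finset.mem_sdiff.mp h).2 hiLS
      have habz : (inner ℝ (a i) z : ℝ) = (inner ℝ (b i) x : ℝ) := by
        have e1 : (inner ℝ (a i) x : ℝ) = (inner ℝ (b i) x : ℝ) := by
          rw [hA i, hsi, add_zero]
        have e2 : (inner ℝ (s i) u : ℝ) = 0 := by rw [hsi, inner_zero_left]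
        have e3 : p i = 0 := (hLzmem i).mp (hLSsub hiLS)
        rw [hai_z i, e1, e2, e3]; ring
      have heq : σ i * (inner ℝ (a i) z : ℝ)
          + ((if i ∈ LS then |(inner ℝ (b i) x : ℝ)| else 0)
          + (if i ∈ Lz \ LS then |(inner ℝ (s i) u : ℝ)| - |(inner ℝ (b i) x : ℝ)| - ‖s i‖ * ‖x‖ else 0))
          = |(inner ℝ (b i) x : ℝ)| := by
        rw [hσi, if_pos hiLS, if_neg hnotin]; ring
      rw [heq, habz]
    · by_cases hiLz : i ∈ Lz
      · have hσi : σ i = 0 := hσLz i hiLz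
        have hpz : p i = 0 := (hLzmem i).mp hiLz
        have hin : i ∈ Lz \ LS := Finset.mem_sdiff.mpr ⟨hiLz, hiLS⟩
        have heq : σ i * (inner ℝ (a i) z : ℝ)
            + ((if i ∈ LS then |(inner ℝ (b i) x : ℝ)| else 0)
            + (if i ∈ Lz \ LS then |(inner ℝ (s i) u : ℝ)| - |(inner ℝ (b i) x : ℝ)| - ‖s i‖ * ‖x‖ else 0))
            = |(inner ℝ (s i) u : ℝ)| - |(inner ℝ (b i) x : ℝ)| - ‖s i‖ * ‖x‖ := by
          rw [hσi, if_neg hiLS, if_pos hin]; ring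
        rw [heq]
        have he : (inner ℝ (s i) u : ℝ)
            = ((inner ℝ (a i) z : ℝ) - (inner ℝ (b i) x : ℝ)) - (inner ℝ (s i) x : ℝ) := by
          rw [hai_z i, hA i, inner_add_left, hpz]; ring
        have t1 : |((inner ℝ (a i) z : ℝ) - (inner ℝ (b i) x : ℝ)) - (inner ℝ (s i) x : ℝ)|
            ≤ |(inner ℝ (a i) z : ℝ) - (inner ℝ (b i) x : ℝ)| + |(inner ℝ (s i) x : ℝ)| :=
          abs_sub _ _
        have t2 : |(inner ℝ (a i) z : ℝ) - (inner ℝ (b i) x : ℝ)|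
            ≤ |(inner ℝ (a i) z : ℝ)| + |(inner ℝ (b i) x : ℝ)| := abs_sub _ _
        have t3 : |(inner ℝ (s i) x : ℝ)| ≤ ‖s i‖ * ‖x‖ := abs_real_inner_le_norm _ _
        rw [he]
        linarith
      · have hn1 : i ∉ Lz \ LS := fun h => hiLz (Finset.mem_sdiff.mp h).1
        have heq : σ i * (inner ℝ (a i) z : ℝ)
            + ((if i ∈ LS then |(inner ℝ (b i) x : ℝ)| else 0)
            + (if i ∈ Lz \ LS then |(inner ℝ (s i) u : ℝ)| - |(inner ℝ (b i) x : ℝ)| - ‖s i‖ * ‖x‖ else 0))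
            = σ i * (inner ℝ (a i) z : ℝ) := by
          rw [if_neg hiLS, if_neg hn1]; ring
        rw [heq, hσdef]
        exact sign_mul_le_abs _ _
  -- sum identity
  set B1 : ℝ := ∑ i ∈ LS, |(inner ℝ (b i) x : ℝ)| with hB1def
  set B2 : ℝ := ∑ i ∈ Lz \ LS, |(inner ℝ (b i) x : ℝ)| with hB2def
  set SU : ℝ := ∑ i ∈ Lz \ LS, |(inner ℝ (s i) u : ℝ)| with hSUdef
  set Mx : ℝ := ∑ i ∈ Lz \ LS, ‖s i‖ with hMxdef
  have hsum_eq : ∑ i, (σ i * (inner ℝ (a i) z : ℝ)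
        + ((if i ∈ LS then |(inner ℝ (b i) x : ℝ)| else 0)
        + (if i ∈ Lz \ LS then |(inner ℝ (s i) u : ℝ)| - |(inner ℝ (b i) x : ℝ)| - ‖s i‖ * ‖x‖ else 0)))
      = (inner ℝ α z : ℝ) + (B1 + (SU - B2 - Mx * ‖x‖)) := by
    rw [Finset.sum_add_distrib, Finset.sum_add_distrib, Finset.sum_ite_mem, Finset.sum_ite_mem,
      Finset.univ_inter, Finset.univ_inter, hαinner z, hB1def, Finset.sum_sub_distrib,
      Finset.sum_sub_distrib, hSUdef, hB2def, hMxdef, Finset.sum_mul]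
  have hαz : (inner ℝ α z : ℝ) = (inner ℝ α x : ℝ) + ((inner ℝ α u : ℝ) + τ * F) := by
    conv_lhs => rw [hzdecomp]
    rw [inner_add_right, inner_add_right, real_inner_smul_right, hFα]
  have hαu : (inner ℝ α u : ℝ) = ∑ i, σ i * (inner ℝ (s i) u : ℝ) := by
    rw [hαinner u]
    refine Finset.sum_congr rfl fun i _ => ?_
    rw [hA i, inner_add_left, horthob u huN i, zero_add]
  have hLzsum : ∑ i ∈ Lz \ LS, |(inner ℝ (s i) u : ℝ)| = ∑ i ∈ Lz, |(inner ℝ (s i) u : ℝ)| := by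
    refine Finset.sum_subset Finset.sdiff_subset fun i hi hni => ?_
    have hiLS : i ∈ LS := by
      by_contra hc
      exact hni (Finset.mem_sdiff.mpr ⟨hi, hc⟩)
    rw [(hLSmem i).mp hiLS, inner_zero_left, abs_zero]
  have hαu_ge : -SU ≤ (inner ℝ α u : ℝ) := by
    have := K2 u huN hvu
    rw [hαu, hSUdef, hLzsum]
    linarith
  have hmain : (inner ℝ α x : ℝ) + τ * F + B1 - B2 - Mx * ‖x‖ ≤ ∑ i, |(inner ℝ (a i) z : ℝ)| := by
    rw [hsum_eq, hαz] at hsum_le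
    linarith
  -- goal LHS is F
  have hgoalL : ∑ i, |(inner ℝ (a i) zs : ℝ)| = F := by
    rw [hFdef]
    exact Finset.sum_congr rfl fun i _ => by rw [hai_zs i]
  rw [hgoalL]
  have hMxM0 : Mx ≤ M0 := by
    rw [hMxdef, hM0def]
    exact Finset.sum_le_sum_of_subset_of_nonneg Finset.sdiff_subset fun i _ _ => norm_nonneg _
  -- final inequality
  have hfinal : F ≤ (inner ℝ α x : ℝ) + τ * F + B1 - B2 - Mx * ‖x‖ := by
    by_cases hx0 : x = 0
    · have hB10 : B1 = 0 := by
        rw [hB1def]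
        exact Finset.sum_eq_zero fun i _ => by rw [hx0, inner_zero_right, abs_zero]
      have hB20 : B2 = 0 := by
        rw [hB2def]
        exact Finset.sum_eq_zero fun i _ => by rw [hx0, inner_zero_right, abs_zero]
      have hαx : (inner ℝ α x : ℝ) = 0 := by rw [hx0, inner_zero_right]
      have hτ1 : τ = 1 := by
        have := hvx
        rw [hx0, inner_zero_right] at this
        linarith
      have hnx : ‖x‖ = 0 := by rw [hx0, norm_zero]
      rw [hB10, hB20, hαx, hτ1, hnx]
      ring_nf
      exact le_refl _
    · have hxnorm : 0 < ‖x‖ := norm_pos_iff.mpr hx0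
      set δ : EuclideanSpace ℝ (Fin n) := ‖x‖⁻¹ • x with hδdef
      have hδR : δ ∈ R := Submodule.smul_mem R _ hxR
      have hδ1 : ‖δ‖ = 1 := by
        rw [hδdef, norm_smul, Real.norm_eq_abs, abs_of_pos (inv_pos.mpr hxnorm)]
        field_simp
      have hbx : ∀ i, |(inner ℝ (b i) x : ℝ)| = ‖x‖ * |(inner ℝ (b i) δ : ℝ)| := by
        intro i
        rw [hδdef, real_inner_smul_right, abs_mul, abs_of_pos (inv_pos.mpr hxnorm)]
        field_simp
      have hB1δ : B1 = ‖x‖ * ∑ i ∈ LS, |(inner ℝ (b i) δ : ℝ)| := by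
        rw [hB1def, Finset.mul_sum]
        exact Finset.sum_congr rfl fun i _ => hbx i
      have hB2δ : B2 = ‖x‖ * ∑ i ∈ Lz \ LS, |(inner ℝ (b i) δ : ℝ)| := by
        rw [hB2def, Finset.mul_sum]
        exact Finset.sum_congr rfl fun i _ => hbx i
      -- vR positive
      have hvR0 : 0 < ‖vR‖ := by
        rcases eq_or_lt_of_le (norm_nonneg vR) with h|h
        · exfalso
          rw [← h] at h2
          norm_num at h2
          linarith [hM00, norm_nonneg α]
        · exact h
      -- From h1
      have hconv : ∑ i ∈ LSᶜ ∩ Lz, |(inner ℝ (b i) δ : ℝ)| = ∑ i ∈ Lz \ LS, |(inner ℝ (b i) δ : ℝ)| := by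
        rw [hcompl]
      have hAB := hc1le δ hδR hδ1
      rw [hconv] at hAB
      have hA := hc2le δ hδR hδ1
      have hkey1 : M0 + ‖α‖ < (1/2) * (∑ i ∈ LS, |(inner ℝ (b i) δ : ℝ)|
          - 2 * ∑ i ∈ Lz \ LS, |(inner ℝ (b i) δ : ℝ)|) := by
        have h12 := mul_le_mul_of_nonneg_left hAB (by norm_num : (0:ℝ) ≤ 1/2)
        linarith [h1]
      -- From h2 and hFle
      have hkey2 : F * ‖vR‖ < (1/2) * ∑ i ∈ LS, |(inner ℝ (b i) δ : ℝ)| := by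
        have h2' : (M0 + ‖α‖) * (2 * ‖vR‖) < ‖vN‖ *
            sInf {x : ℝ | ∃ δ, δ ∈ R ∧ ‖δ‖ = 1 ∧ x = ∑ i ∈ LS, |(inner ℝ (b i) δ : ℝ)|} := by
          rw [div_mul_eq_mul_div] at h2
          exact (lt_div_iff₀ (by positivity)).mp h2
        have hc2A := mul_le_mul_of_nonneg_left hA (norm_nonneg vN)
        have hstep : F * ‖vN‖ * (2 * ‖vR‖) ≤ (M0 + ‖α‖) * (2 * ‖vR‖) :=
          mul_le_mul_of_nonneg_right hFle (by positivity)
        nlinarith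
      -- inner ℝ bounds
      have hαx_ge : -(‖α‖ * ‖x‖) ≤ (inner ℝ α x : ℝ) := by
        have := abs_real_inner_le_norm α x
        have := neg_abs_le (inner ℝ α x : ℝ)
        linarith
      have hvxF : (1 - τ) * F ≤ ‖vR‖ * ‖x‖ * F := by
        have e1 : (inner ℝ v x : ℝ) = (inner ℝ vR x : ℝ) := hinner_vR x hxR
        have e2 : (inner ℝ vR x : ℝ) ≤ ‖vR‖ * ‖x‖ := real_inner_le_norm _ _
        have : 1 - τ ≤ ‖vR‖ * ‖x‖ := by rw [← hvx, e1]; exact e2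
        exact mul_le_mul_of_nonneg_right this hF0
      nlinarith [hxnorm, hF0, mul_pos hxnorm hvR0]
  calc F ≤ (inner ℝ α x : ℝ) + τ * F + B1 - B2 - Mx * ‖x‖ := hfinal
    _ ≤ ∑ i, |(inner ℝ (a i) z : ℝ)| := hmain
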